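/- Fix γ ∈ [0, 1]. For α ∈ (0, 1/2), the derivative of the map α ↦ f(α, γ) vanishes at α if and only if 4α⁶ − 16α⁵ + 26α³ − 16α² + 1 = γ·(2α⁶ − 8α⁵ − α⁴ + 14α³ − 10α² + 2α). -/

import Mathlib

noncomputable section

lemma quartic_hasDerivAt (c4 c3 c2 c1 c0 x : ℝ) :
    HasDerivAt (fun a : ℝ => c4*a^4 + c3*a^3 + c2*a^2 + c1*a + c0)
      (4*c4*x^3 + 3*c3*x^2 + 2*c2*x + c1) x := by
  have h := (((((hasDerivAt_pow 4 x).const_mul c4).add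
      ((hasDerivAt_pow 3 x).const_mul c3)).add
      ((hasDerivAt_pow 2 x).const_mul c2)).add
      ((hasDerivAt_id x).const_mul c1)).add_const c0
  refine h.congr_deriv ?_
  push_cast
  ring

/-- Attacker's expected per-block reward (normalized by the block reward) under
Eyal–Sirer selfish mining, numerator. -/
def Na (α γ : ℝ) : ℝ :=
  (-2*α^4 + 5*α^3 - 4*α^2 + α) * γ + 4*α^4 - 9*α^3 + 4*α^2

/-- Honest miners' expected per-block reward (normalized by the block reward)
under Eyal–Sirer selfish mining, numerator. -/
def Nh (α γ : ℝ) : ℝ :=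
  (2*α^4 - 5*α^3 + 4*α^2 - α) * γ - 4*α^4 + 10*α^3 - 6*α^2 - α + 1

/-- Common denominator of the Eyal–Sirer reward expressions. -/
def D (α : ℝ) : ℝ := 2*α^3 - 4*α^2 + 1

/-- Honest miners' share of total effective rewards times `α/(1-α)`; equality
`f α γ = MC/B` characterizes zero honest profit under elastic hash supply. -/
def f (α γ : ℝ) : ℝ := α * Nh α γ / ((1 - α) * (Na α γ + Nh α γ))

/-- For fixed `γ ∈ [0,1]` and `α ∈ (0, 1/2)`, the derivative of `α ↦ f(α,γ)`
vanishes at `α` iff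
`4α⁶ − 16α⁵ + 26α³ − 16α² + 1 = γ(2α⁶ − 8α⁵ − α⁴ + 14α³ − 10α² + 2α)`. -/
theorem deriv_f_eq_zero_iff (γ : ℝ) (hγ0 : 0 ≤ γ) (hγ1 : γ ≤ 1)
    (α : ℝ) (hα : α ∈ Set.Ioo (0 : ℝ) (1/2)) :
    deriv (fun a => f a γ) α = 0 ↔
      4*α^6 - 16*α^5 + 26*α^3 - 16*α^2 + 1
        = γ * (2*α^6 - 8*α^5 - α^4 + 14*α^3 - 10*α^2 + 2*α) := by
  obtain ⟨h0, h2⟩ := hα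
  -- denominator value and positivity
  have hQpos : (0:ℝ) < (1 - α) * (Na α γ + Nh α γ) := by
    have : Na α γ + Nh α γ = α^3 - 2*α^2 - α + 1 := by simp [Na, Nh]; ring
    rw [this]
    have h1 : (0:ℝ) < 1 - α := by linarith
    have h2' : (0:ℝ) < α^3 - 2*α^2 - α + 1 := by nlinarith [sq_nonneg α, sq_nonneg (α - 1/2)]
    positivity
  have hQ0 : (1 - α) * (Na α γ + Nh α γ) ≠ 0 := ne_of_gt hQpos
  -- derivative of Nh
  have hNh : HasDerivAt (fun a : ℝ => Nh a γ)
      (4*(2*γ-4)*α^3 + 3*(-5*γ+10)*α^2 + 2*(4*γ-6)*α + (-γ-1)) α := by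
    have h := quartic_hasDerivAt (2*γ-4) (-5*γ+10) (4*γ-6) (-γ-1) 1 α
    convert h using 1
    funext a; simp [Nh]; ring
  -- derivative of numerator a * Nh a γ
  have hP : HasDerivAt (fun a : ℝ => a * Nh a γ)
      (1 * Nh α γ + α * (4*(2*γ-4)*α^3 + 3*(-5*γ+10)*α^2 + 2*(4*γ-6)*α + (-γ-1))) α :=
    (hasDerivAt_id α).mul hNh
  -- derivative of denominator
  have hQ : HasDerivAt (fun a : ℝ => (1 - a) * (Na a γ + Nh a γ))
      (4*(-1)*α^3 + 3*3*α^2 + 2*(-1)*α + (-2)) α := by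
    have h := quartic_hasDerivAt (-1) 3 (-1) (-2) 1 α
    convert h using 1
    funext a; simp [Na, Nh]; ring
  have hF : HasDerivAt (fun a => f a γ)
      (((1 * Nh α γ + α * (4*(2*γ-4)*α^3 + 3*(-5*γ+10)*α^2 + 2*(4*γ-6)*α + (-γ-1))) *
          ((1 - α) * (Na α γ + Nh α γ)) -
        α * Nh α γ * (4*(-1)*α^3 + 3*3*α^2 + 2*(-1)*α + (-2))) /
        ((1 - α) * (Na α γ + Nh α γ))^2) α := by
    have := hP.div hQ hQ0
    exact this
  rw [hF.deriv, div_eq_zero_iff]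
  have hQ2 : ((1 - α) * (Na α γ + Nh α γ))^2 ≠ 0 := pow_ne_zero 2 hQ0
  have hfac : (1 * Nh α γ + α * (4*(2*γ-4)*α^3 + 3*(-5*γ+10)*α^2 + 2*(4*γ-6)*α + (-γ-1))) *
          ((1 - α) * (Na α γ + Nh α γ)) -
        α * Nh α γ * (4*(-1)*α^3 + 3*3*α^2 + 2*(-1)*α + (-2)) =
      ((4*α^6 - 16*α^5 + 26*α^3 - 16*α^2 + 1) -
        γ * (2*α^6 - 8*α^5 - α^4 + 14*α^3 - 10*α^2 + 2*α)) * (α - 1)^2 := by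
    simp [Na, Nh]; ring
  have hα1 : (α - 1)^2 ≠ 0 := by
    have : α - 1 ≠ 0 := by intro h; rw [sub_eq_zero] at h; rw [h] at h2; norm_num at h2
    exact pow_ne_zero 2 this
  constructor
  · rintro (h | h)
    · rw [hfac, mul_eq_zero] at h
      rcases h with h | h
      · linarith [sub_eq_zero.mp (by linarith : (4*α^6 - 16*α^5 + 26*α^3 - 16*α^2 + 1) - γ * (2*α^6 - 8*α^5 - α^4 + 14*α^3 - 10*α^2 + 2*α) = 0)]
      · exact absurd h hα1
    · exact absurd h hQ2
  · intro h
    left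
    rw [hfac]
    have : (4*α^6 - 16*α^5 + 26*α^3 - 16*α^2 + 1) -
        γ * (2*α^6 - 8*α^5 - α^4 + 14*α^3 - 10*α^2 + 2*α) = 0 := by linarith
    rw [this, zero_mul]
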